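/- Let the recursion [U°, ψ_{k+1}] = (nA + k·Id)ψ_k hold for 2×2 matrices ψ_k with ψ₀ = Id, where U° = diag(u₁,u₂), x = u₁-u₂ ≠ 0, n ∈ ℤ, n ≠ 0, A = [[0,1],[1,0]]. If ψ_k = c_k(Id - (k/n)A)D^k with D = diag(-1,1) and c_k = (∏_{j=0}^{k-1}(j²-n²))/(k!·x^k), then (nA + |n|·Id)ψ_{|n|} = 0; hence the recursion can be continued with ψ_k = 0 for all k > |n|, yielding a polynomial solution of degree |n|. -/

import Mathlib

open Matrix Finset

/-- With `U° = diag(u₁,u₂)`, `x = u₁ - u₂ ≠ 0`, `0 ≠ n ∈ ℤ`,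
`A = [[0,1],[1,0]]`, `D = diag(-1,1)` and
`ψ_k = (∏_{j<k}(j²-n²))/(k!·x^k) · (Id - (k/n)A)·D^k`, one has
`(nA + |n|·Id)·ψ_{|n|} = 0`; hence the recursion `[U°,ψ_{k+1}] = (nA + k·Id)ψ_k`
can be continued with `ψ_k = 0` for `k > |n|`, yielding a polynomial solution of
degree `|n|`. -/
theorem statement9 (u₁ u₂ x : ℂ) (hx : x ≠ 0) (hux : u₁ - u₂ = x)
    (n : ℤ) (hn : n ≠ 0)
    (ψ : ℕ → Matrix (Fin 2) (Fin 2) ℂ)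
    (hψ0 : ψ 0 = 1)
    (hψ : ∀ k : ℕ, 1 ≤ k → k ≤ n.natAbs →
      ψ k = ((∏ j ∈ Finset.range k, ((j : ℂ) ^ 2 - (n : ℂ) ^ 2))
              / ((k.factorial : ℂ) * x ^ k)) •
            ((1 - ((k : ℂ) / (n : ℂ)) • !![(0:ℂ), 1; 1, 0])
              * !![(-1 : ℂ), 0; 0, 1] ^ k))
    (hψtail : ∀ k : ℕ, n.natAbs < k → ψ k = 0) :
    ((n : ℂ) • !![(0:ℂ), 1; 1, 0] + (n.natAbs : ℂ) • (1 : Matrix (Fin 2) (Fin 2) ℂ))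
        * ψ n.natAbs = 0 ∧
    ∀ k : ℕ, n.natAbs ≤ k →
      !![u₁, 0; 0, u₂] * ψ (k + 1) - ψ (k + 1) * !![u₁, 0; 0, u₂]
        = ((n : ℂ) • !![(0:ℂ), 1; 1, 0] + (k : ℂ) • 1) * ψ k := by

  set m := n.natAbs with hm
  have hm1 : 1 ≤ m := Nat.one_le_iff_ne_zero.mpr (Int.natAbs_ne_zero.mpr hn)
  have hnC : (n : ℂ) ≠ 0 := Int.cast_ne_zero.mpr hn
  have hmsq : ((m : ℂ))^2 = (n : ℂ)^2 := by
    have h2 : ((m : ℤ))^2 = n^2 := by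
      simp [hm, sq, Int.natAbs_mul_self]
    have := congrArg (fun z : ℤ => (z : ℂ)) h2
    push_cast at this
    simpa using this
  have key : (((n : ℂ) • !![(0:ℂ), 1; 1, 0] + (m : ℂ) • (1 : Matrix (Fin 2) (Fin 2) ℂ))
      * (1 - ((m : ℂ) / (n : ℂ)) • !![(0:ℂ), 1; 1, 0])) = 0 := by
    ext i j
    fin_cases i <;> fin_cases j <;>
      simp [Matrix.mul_apply, Fin.sum_univ_two, Matrix.one_apply] <;>
      field_simp <;> ring_nf <;> linear_combination -hmsq
  have h1 : ((n : ℂ) • !![(0:ℂ), 1; 1, 0] + (m : ℂ) • (1 : Matrix (Fin 2) (Fin 2) ℂ))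
      * ψ m = 0 := by
    rw [hψ m hm1 le_rfl, Matrix.mul_smul, ← Matrix.mul_assoc, key, Matrix.zero_mul, smul_zero]
  refine ⟨h1, fun k hk => ?_⟩
  rcases eq_or_lt_of_le hk with h | h
  · rw [hψtail (k+1) (by omega), ← h]
    simp only [Matrix.mul_zero, Matrix.zero_mul, sub_zero]
    exact h1.symm
  · rw [hψtail (k+1) (by omega), hψtail k h]
    simp
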